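/- arXiv:1011.1606 — 2 statements merged into one kernel-verified Lean document; each statement's English description precedes it below -/
import Mathlib

section
/- Let M →f E →g N →δ M⟦1⟧ be a distinguished triangle in C whose connecting morphism δ is nonzero (a non-split triangle). Assume moreover that C satisfies the Ext¹-symmetry condition: for all objects X, Y of C one has dim_k Hom(X, Y⟦1⟧) = dim_k Hom(Y, X⟦1⟧). Then dim_k Hom(E, E⟦1⟧) < dim_k Hom(M ⊕ N, (M ⊕ N)⟦1⟧). -/
open CategoryTheory CategoryTheory.Limits CategoryTheory.Pretriangulated Module

section Aux

variable {k : Type*} [Field k] {A B D : Type*}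
  [AddCommGroup A] [Module k A] [AddCommGroup B] [Module k B]
  [AddCommGroup D] [Module k D]
  [FiniteDimensional k A] [FiniteDimensional k B] [FiniteDimensional k D]

lemma stmt0_aux_le (α : A →ₗ[k] B) (β : B →ₗ[k] D)
    (h : LinearMap.ker β ≤ LinearMap.range α) :
    finrank k B ≤ finrank k A + finrank k D := by
  have h1 := β.finrank_range_add_finrank_ker
  have h2 : finrank k (LinearMap.ker β) ≤ finrank k (LinearMap.range α) :=
    Submodule.finrank_mono h
  have h3 : finrank k (LinearMap.range α) ≤ finrank k A :=
    LinearMap.finrank_range_le α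
  have h4 : finrank k (LinearMap.range β) ≤ finrank k D :=
    Submodule.finrank_le _
  omega

lemma stmt0_aux_lt (α : A →ₗ[k] B) (β : B →ₗ[k] D)
    (h : LinearMap.ker β ≤ LinearMap.range α)
    (x : A) (hx : x ≠ 0) (hαx : α x = 0) :
    finrank k B < finrank k A + finrank k D := by
  have h1 := β.finrank_range_add_finrank_ker
  have h2 : finrank k (LinearMap.ker β) ≤ finrank k (LinearMap.range α) :=
    Submodule.finrank_mono h
  have h4 : finrank k (LinearMap.range β) ≤ finrank k D :=
    Submodule.finrank_le _
  have h5 := α.finrank_range_add_finrank_ker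
  have h6 : 0 < finrank k (LinearMap.ker α) := by
    have : Nontrivial (LinearMap.ker α) := by
      refine ⟨⟨x, hαx⟩, 0, ?_⟩
      simp [Subtype.ext_iff, hx]
    exact finrank_pos
  omega

end Aux

section Biprod

variable {k : Type*} [Field k] {C : Type*} [Category C] [Preadditive C] [Linear k C]
  [HasBinaryBiproducts C]

/-- `Hom(M ⊞ N, X) ≃ₗ Hom(M, X) × Hom(N, X)`. -/
noncomputable def stmt0_biprodHomEquivLeft (M N X : C) :
    ((M ⊞ N) ⟶ X) ≃ₗ[k] (M ⟶ X) × (N ⟶ X) where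
  toFun φ := (biprod.inl ≫ φ, biprod.inr ≫ φ)
  map_add' φ ψ := by simp [Prod.ext_iff]
  map_smul' r φ := by simp [Prod.ext_iff]
  invFun p := biprod.desc p.1 p.2
  left_inv φ := by apply biprod.hom_ext' <;> simp
  right_inv p := by simp

/-- `Hom(X, M ⊞ N) ≃ₗ Hom(X, M) × Hom(X, N)`. -/
noncomputable def stmt0_biprodHomEquivRight (X M N : C) :
    (X ⟶ (M ⊞ N)) ≃ₗ[k] (X ⟶ M) × (X ⟶ N) where
  toFun φ := (φ ≫ biprod.fst, φ ≫ biprod.snd)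
  map_add' φ ψ := by simp [Prod.ext_iff]
  map_smul' r φ := by simp [Prod.ext_iff]
  invFun p := biprod.lift p.1 p.2
  left_inv φ := by apply biprod.hom_ext <;> simp
  right_inv p := by simp

lemma stmt0_finrank_biprod_hom_left [∀ X Y : C, FiniteDimensional k (X ⟶ Y)]
    (M N X : C) :
    finrank k ((M ⊞ N) ⟶ X) = finrank k (M ⟶ X) + finrank k (N ⟶ X) := by
  rw [(stmt0_biprodHomEquivLeft (k := k) M N X).finrank_eq, Module.finrank_prod]

lemma stmt0_finrank_biprod_hom_right [∀ X Y : C, FiniteDimensional k (X ⟶ Y)]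
    (X M N : C) :
    finrank k (X ⟶ (M ⊞ N)) = finrank k (X ⟶ M) + finrank k (X ⟶ N) := by
  rw [(stmt0_biprodHomEquivRight (k := k) X M N).finrank_eq, Module.finrank_prod]

end Biprod

/-- Let `k` be a field and `C` a `k`-linear pretriangulated category
with binary biproducts whose Hom-spaces are finite dimensional over `k`.
If `M ⟶ E ⟶ N ⟶ M⟦1⟧` is a non-split distinguished triangle (the connecting
morphism `δ` is nonzero), and `C` satisfies the Ext¹-symmetry condition
`dim Hom(X, Y⟦1⟧) = dim Hom(Y, X⟦1⟧)` for all `X Y`, then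
`dim Ext¹(E, E) < dim Ext¹(M ⊕ N, M ⊕ N)`. -/
theorem stmt0 {k : Type*} [Field k]
    {C : Type*} [Category C] [Preadditive C] [Linear k C]
    [HasZeroObject C] [HasShift C ℤ]
    [∀ n : ℤ, (shiftFunctor C n).Additive] [Pretriangulated C]
    [HasBinaryBiproducts C]
    [∀ X Y : C, FiniteDimensional k (X ⟶ Y)]
    (M E N : C) (f : M ⟶ E) (g : E ⟶ N) (δ : N ⟶ M⟦(1 : ℤ)⟧)
    (hT : Triangle.mk f g δ ∈ distTriang C) (hδ : δ ≠ 0)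
    (hsym : ∀ X Y : C,
      finrank k (X ⟶ Y⟦(1 : ℤ)⟧) = finrank k (Y ⟶ X⟦(1 : ℤ)⟧)) :
    finrank k (E ⟶ E⟦(1 : ℤ)⟧) <
      finrank k ((M ⊞ N) ⟶ (M ⊞ N)⟦(1 : ℤ)⟧) := by
  -- Step 1 (strict, contravariant into M⟦1⟧)
  have h1 : finrank k (E ⟶ M⟦(1 : ℤ)⟧) <
      finrank k (N ⟶ M⟦(1 : ℤ)⟧) + finrank k (M ⟶ M⟦(1 : ℤ)⟧) := by
    refine stmt0_aux_lt (Linear.leftComp k _ g) (Linear.leftComp k _ f) ?_ δ hδ ?_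
    · intro φ hφ
      simp only [LinearMap.mem_ker, Linear.leftComp_apply] at hφ
      obtain ⟨ψ, hψ⟩ := Triangle.yoneda_exact₂ _ hT φ hφ
      exact ⟨ψ, hψ.symm⟩
    · exact comp_distTriang_mor_zero₂₃ _ hT
  -- Step 2 (contravariant into N⟦1⟧)
  have h2 : finrank k (E ⟶ N⟦(1 : ℤ)⟧) ≤
      finrank k (N ⟶ N⟦(1 : ℤ)⟧) + finrank k (M ⟶ N⟦(1 : ℤ)⟧) := by
    refine stmt0_aux_le (Linear.leftComp k _ g) (Linear.leftComp k _ f) ?_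
    intro φ hφ
    simp only [LinearMap.mem_ker, Linear.leftComp_apply] at hφ
    obtain ⟨ψ, hψ⟩ := Triangle.yoneda_exact₂ _ hT φ hφ
    exact ⟨ψ, hψ.symm⟩
  -- Step 3 (covariant from E)
  have h3 : finrank k (E ⟶ E⟦(1 : ℤ)⟧) ≤
      finrank k (E ⟶ M⟦(1 : ℤ)⟧) + finrank k (E ⟶ N⟦(1 : ℤ)⟧) := by
    refine stmt0_aux_le (Linear.rightComp k E (f⟦(1 : ℤ)⟧'))
      (Linear.rightComp k E (g⟦(1 : ℤ)⟧')) ?_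
    intro φ hφ
    simp only [LinearMap.mem_ker, Linear.rightComp_apply] at hφ
    obtain ⟨ψ, hψ⟩ :=
      Triangle.coyoneda_exact₁ _ (rot_of_distTriang _ hT) φ hφ
    refine ⟨-ψ, ?_⟩
    show (-ψ) ≫ f⟦(1 : ℤ)⟧' = φ
    rw [hψ]
    simp [Triangle.rotate]
    exact (Preadditive.neg_comp _ _).trans (Preadditive.comp_neg _ _).symm
  -- Step 4: compute the finrank of Hom(M ⊞ N, (M ⊞ N)⟦1⟧)
  haveI : PreservesBinaryBiproducts (shiftFunctor C (1 : ℤ)) :=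
    preservesBinaryBiproducts_of_preservesBiproducts _
  have e : ((M ⊞ N)⟦(1 : ℤ)⟧) ≅ (M⟦(1 : ℤ)⟧ ⊞ N⟦(1 : ℤ)⟧) :=
    (shiftFunctor C (1 : ℤ)).mapBiprod M N
  have h4 : ∀ X : C,
      finrank k (X ⟶ (M ⊞ N)⟦(1 : ℤ)⟧) =
        finrank k (X ⟶ M⟦(1 : ℤ)⟧) + finrank k (X ⟶ N⟦(1 : ℤ)⟧) := by
    intro X
    rw [(Linear.homCongr k (Iso.refl X) e).finrank_eq]
    exact stmt0_finrank_biprod_hom_right X _ _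
  have h5 : finrank k ((M ⊞ N) ⟶ (M ⊞ N)⟦(1 : ℤ)⟧) =
      finrank k (M ⟶ M⟦(1 : ℤ)⟧) + finrank k (M ⟶ N⟦(1 : ℤ)⟧) +
        (finrank k (N ⟶ M⟦(1 : ℤ)⟧) + finrank k (N ⟶ N⟦(1 : ℤ)⟧)) := by
    rw [stmt0_finrank_biprod_hom_left, h4 M, h4 N]
  omega
end

section
/- Let M →f E →g N →δ M⟦1⟧ be a distinguished triangle in C with δ ≠ 0 (non-split). Then dim_k Hom(E, N⟦1⟧) + dim_k Hom(E, M⟦1⟧) < dim_k Hom(M ⊕ N, (M ⊕ N)⟦1⟧), where the right-hand side equals dim_k Hom(N, N⟦1⟧) + dim_k Hom(M, N⟦1⟧) + dim_k Hom(N, M⟦1⟧) + dim_k Hom(M, M⟦1⟧). (No Ext¹-symmetry hypothesis is needed for this inequality.) -/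
open CategoryTheory CategoryTheory.Limits CategoryTheory.Pretriangulated Module

section Aux

variable {k : Type*} [Field k] {C : Type*} [Category C] [Preadditive C] [Linear k C]
  [∀ X Y : C, FiniteDimensional k (X ⟶ Y)]

/-- Linear equivalence `Hom(M ⊞ N, Z) ≃ Hom(M,Z) × Hom(N,Z)`. -/
noncomputable def homBiprodLeft [HasBinaryBiproducts C] (M N Z : C) :
    ((M ⊞ N) ⟶ Z) ≃ₗ[k] (M ⟶ Z) × (N ⟶ Z) where
  toFun h := (biprod.inl ≫ h, biprod.inr ≫ h)
  map_add' x y := by simp [Preadditive.comp_add]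
  map_smul' c x := by simp [CategoryTheory.Linear.comp_smul]
  invFun p := biprod.desc p.1 p.2
  left_inv h := by aesop_cat
  right_inv p := by simp

/-- Linear equivalence `Hom(X, M ⊞ N) ≃ Hom(X,M) × Hom(X,N)`. -/
noncomputable def homBiprodRight [HasBinaryBiproducts C] (X M N : C) :
    (X ⟶ (M ⊞ N)) ≃ₗ[k] (X ⟶ M) × (X ⟶ N) where
  toFun h := (h ≫ biprod.fst, h ≫ biprod.snd)
  map_add' x y := by simp [Preadditive.add_comp]
  map_smul' c x := by simp [CategoryTheory.Linear.smul_comp]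
  invFun p := biprod.lift p.1 p.2
  left_inv h := by aesop_cat
  right_inv p := by simp

lemma finrank_homBiprodLeft [HasBinaryBiproducts C] (M N Z : C) :
    finrank k ((M ⊞ N) ⟶ Z) = finrank k (M ⟶ Z) + finrank k (N ⟶ Z) := by
  rw [(homBiprodLeft (k := k) M N Z).finrank_eq, Module.finrank_prod]

lemma finrank_homBiprodRight [HasBinaryBiproducts C] (X M N : C) :
    finrank k (X ⟶ (M ⊞ N)) = finrank k (X ⟶ M) + finrank k (X ⟶ N) := by
  rw [(homBiprodRight (k := k) X M N).finrank_eq, Module.finrank_prod]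

end Aux

/-- Let `k` be a field and `C` a `k`-linear pretriangulated category
with binary biproducts whose Hom-spaces are finite dimensional over `k`.
If `M ⟶ E ⟶ N ⟶ M⟦1⟧` is a non-split distinguished triangle (`δ ≠ 0`), then
`dim Ext¹(E, N) + dim Ext¹(E, M) < dim Ext¹(M ⊕ N, M ⊕ N)`, where the right-hand
side equals `dim Ext¹(N,N) + dim Ext¹(M,N) + dim Ext¹(N,M) + dim Ext¹(M,M)`. -/
theorem stmt5 {k : Type*} [Field k]
    {C : Type*} [Category C] [Preadditive C] [Linear k C]
    [HasZeroObject C] [HasShift C ℤ]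
    [∀ n : ℤ, (shiftFunctor C n).Additive] [Pretriangulated C]
    [HasBinaryBiproducts C]
    [∀ X Y : C, FiniteDimensional k (X ⟶ Y)]
    (M E N : C) (f : M ⟶ E) (g : E ⟶ N) (δ : N ⟶ M⟦(1 : ℤ)⟧)
    (hT : Triangle.mk f g δ ∈ distTriang C) (hδ : δ ≠ 0) :
    (finrank k (E ⟶ N⟦(1 : ℤ)⟧) + finrank k (E ⟶ M⟦(1 : ℤ)⟧) <
        finrank k ((M ⊞ N) ⟶ (M ⊞ N)⟦(1 : ℤ)⟧)) ∧
      finrank k ((M ⊞ N) ⟶ (M ⊞ N)⟦(1 : ℤ)⟧) =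
        finrank k (N ⟶ N⟦(1 : ℤ)⟧) + finrank k (M ⟶ N⟦(1 : ℤ)⟧) +
          finrank k (N ⟶ M⟦(1 : ℤ)⟧) + finrank k (M ⟶ M⟦(1 : ℤ)⟧) := by
  -- decompose the RHS
  have : PreservesBinaryBiproduct M N (shiftFunctor C (1:ℤ)) :=
    preservesBinaryBiproduct_of_preservesBiproduct _ _ _
  have eshift : ((M ⊞ N)⟦(1:ℤ)⟧) ≅ (M⟦(1:ℤ)⟧ ⊞ N⟦(1:ℤ)⟧) :=
    (shiftFunctor C (1:ℤ)).mapBiprod M N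
  have hcongr : ∀ X : C, finrank k (X ⟶ (M ⊞ N)⟦(1:ℤ)⟧) =
      finrank k (X ⟶ M⟦(1:ℤ)⟧) + finrank k (X ⟶ N⟦(1:ℤ)⟧) := fun X => by
    rw [(CategoryTheory.Linear.homCongr k (Iso.refl X) eshift).finrank_eq,
      finrank_homBiprodRight]
  have hRHS : finrank k ((M ⊞ N) ⟶ (M ⊞ N)⟦(1 : ℤ)⟧) =
      finrank k (N ⟶ N⟦(1 : ℤ)⟧) + finrank k (M ⟶ N⟦(1 : ℤ)⟧) +
        finrank k (N ⟶ M⟦(1 : ℤ)⟧) + finrank k (M ⟶ M⟦(1 : ℤ)⟧) := by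
    rw [finrank_homBiprodLeft, hcongr M, hcongr N]
    omega
  refine ⟨?_, hRHS⟩
  rw [hRHS]
  -- the key exact-sequence dimension count
  have key : ∀ X : C, finrank k (E ⟶ X) ≤ finrank k (N ⟶ X) + finrank k (M ⟶ X) ∧
      (∀ d : N ⟶ X, d ≠ 0 → g ≫ d = 0 →
        finrank k (E ⟶ X) < finrank k (N ⟶ X) + finrank k (M ⟶ X)) := by
    intro X
    set G : (N ⟶ X) →ₗ[k] (E ⟶ X) := Linear.leftComp k X g with hG
    set F : (E ⟶ X) →ₗ[k] (M ⟶ X) := Linear.leftComp k X f with hF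
    have hker : LinearMap.ker F = LinearMap.range G := by
      ext x
      constructor
      · intro hx
        obtain ⟨y, hy⟩ := Triangle.yoneda_exact₂ _ hT x hx
        exact ⟨y, hy.symm⟩
      · rintro ⟨y, rfl⟩
        have h12 := comp_distTriang_mor_zero₁₂ _ hT
        simp only [Triangle.mk_mor₁, Triangle.mk_mor₂] at h12
        show f ≫ g ≫ y = 0
        rw [← Category.assoc]
        exact (congrArg (· ≫ y) h12).trans Limits.zero_comp
      
    have hdim : finrank k (E ⟶ X) =
        finrank k (LinearMap.range G) + finrank k (LinearMap.range F) := by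
      have := LinearMap.finrank_range_add_finrank_ker F
      rw [hker] at this
      omega
    have hG_le : finrank k (LinearMap.range G) ≤ finrank k (N ⟶ X) :=
      LinearMap.finrank_range_le G
    have hF_le : finrank k (LinearMap.range F) ≤ finrank k (M ⟶ X) :=
      Submodule.finrank_le _
    constructor
    · omega
    · intro d hd hgd
      have hkerG : 0 < finrank k (LinearMap.ker G) := by
        have hne : Nontrivial (LinearMap.ker G) := by
          refine ⟨⟨d, hgd⟩, 0, ?_⟩
          simp [Subtype.ext_iff, hd]
        exact finrank_pos
      have := LinearMap.finrank_range_add_finrank_ker G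
      omega
  have h31 := comp_distTriang_mor_zero₃₁ _ hT
  simp only [Triangle.mk_mor₃, Triangle.mk_mor₁] at h31
  have h23 := comp_distTriang_mor_zero₂₃ _ hT
  simp only [Triangle.mk_mor₂, Triangle.mk_mor₃] at h23
  have h1 := (key (N⟦(1:ℤ)⟧)).1
  have h2 := (key (M⟦(1:ℤ)⟧)).2 δ hδ h23
  omega
end
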